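/- Let n ≥ 2 and let λ = k·log₂(n−1) for some real k ≥ 1/2 (with λ a positive integer). Then there exists a bipartite covering H of the complete multigraph K_n^λ with |H| ≤ (2 + 30/√k)·λ, and hence cap(H) ≤ (2 + 30/√k)·λ·n. -/

import Mathlib

open Finset in
lemma myBallBound (m r : ℕ) (x : Fin m → Bool) :
    ((univ : Finset (Fin m → Bool)).filter fun y => hammingDist x y ≤ r).card
      ≤ ∑ j ∈ Finset.range (r+1), m.choose j := by
  classical
  have key : ((univ : Finset (Fin m → Bool)).filter fun y => hammingDist x y ≤ r).card
      ≤ ((Finset.range (r+1)).biUnion fun j =>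
          Finset.powersetCard j (univ : Finset (Fin m))).card := by
    apply Finset.card_le_card_of_injOn (fun y => univ.filter fun i => x i ≠ y i)
    · intro y hy
      simp only [Finset.mem_coe, Finset.mem_filter, Finset.mem_univ, true_and] at hy
      rw [Finset.mem_coe, Finset.mem_biUnion]
      refine ⟨(univ.filter fun i => x i ≠ y i).card, ?_, ?_⟩
      · rw [Finset.mem_range]
        have : hammingDist x y = (univ.filter fun i => x i ≠ y i).card := rfl
        omega
      · rw [Finset.mem_powersetCard]; exact ⟨Finset.subset_univ _, rfl⟩
    · intro a ha b hb hab
      funext i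
      have hab' : (univ.filter fun j => x j ≠ a j) = (univ.filter fun j => x j ≠ b j) := hab
      have h1 : (i ∈ univ.filter fun j => x j ≠ a j) ↔ (i ∈ univ.filter fun j => x j ≠ b j) := by
        rw [hab']
      simp only [Finset.mem_filter, Finset.mem_univ, true_and] at h1
      revert h1; cases (x i) <;> cases (a i) <;> cases (b i) <;> simp
  refine key.trans ?_
  rw [Finset.card_biUnion]
  · apply le_of_eq
    apply Finset.sum_congr rfl
    intro j _
    rw [Finset.card_powersetCard, Finset.card_univ, Fintype.card_fin]
  · intro a _ b _ hab
    apply Finset.disjoint_left.mpr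
    intro s hs hs'
    rw [Finset.mem_powersetCard] at hs hs'
    exact hab (hs.2 ▸ hs'.2.symm ▸ rfl)




open Finset in
lemma myExistsCode (m lam n : ℕ) (hlam : 1 ≤ lam)
    (hcard : n * ∑ j ∈ Finset.range lam, m.choose j ≤ 2 ^ m) :
    ∃ S : Finset (Fin m → Bool), S.card = n ∧
      ∀ a ∈ S, ∀ b ∈ S, a ≠ b → lam ≤ hammingDist a b := by
  classical
  set Vol := ∑ j ∈ Finset.range lam, m.choose j with hVol
  have hVol1 : 1 ≤ Vol := by
    calc 1 = m.choose 0 := (Nat.choose_zero_right m).symm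
    _ ≤ Vol := Finset.single_le_sum (f := fun j => m.choose j) (fun _ _ => Nat.zero_le _)
        (Finset.mem_range.mpr (by omega))
  suffices h : ∀ t, t ≤ n → ∃ S : Finset (Fin m → Bool), S.card = t ∧
      ∀ a ∈ S, ∀ b ∈ S, a ≠ b → lam ≤ hammingDist a b from h n le_rfl
  intro t
  induction t with
  | zero => intro _; exact ⟨∅, by simp⟩
  | succ t ih =>
    intro ht
    obtain ⟨S, hScard, hSdist⟩ := ih (by omega)
    set U := S.biUnion (fun s => (univ : Finset (Fin m → Bool)).filter
      fun y => hammingDist s y ≤ lam - 1) with hU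
    have hUcard : U.card < 2 ^ m := by
      have h1 : U.card ≤ t * Vol := by
        calc U.card ≤ ∑ s ∈ S, ((univ : Finset (Fin m → Bool)).filter
            fun y => hammingDist s y ≤ lam - 1).card := Finset.card_biUnion_le
        _ ≤ ∑ _s ∈ S, Vol := by
            apply Finset.sum_le_sum
            intro s _
            have := myBallBound m (lam - 1) s
            have heq : lam - 1 + 1 = lam := by omega
            rwa [heq] at this
        _ = t * Vol := by rw [Finset.sum_const, hScard, smul_eq_mul]
      have h2 : t * Vol + Vol ≤ 2 ^ m := by
        calc t * Vol + Vol = (t + 1) * Vol := by ring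
        _ ≤ n * Vol := Nat.mul_le_mul_right _ ht
        _ ≤ 2 ^ m := hcard
      omega
    have hex : ∃ y : Fin m → Bool, y ∉ U := by
      by_contra hc
      push_neg at hc
      have : U = univ := Finset.eq_univ_iff_forall.mpr hc
      rw [this, Finset.card_univ] at hUcard
      simp [Fintype.card_fun] at hUcard
    obtain ⟨y, hy⟩ := hex
    have hdist : ∀ s ∈ S, lam ≤ hammingDist s y := by
      intro s hs
      by_contra hlt
      push_neg at hlt
      apply hy
      rw [hU, Finset.mem_biUnion]
      exact ⟨s, hs, by simp; omega⟩
    have hyS : y ∉ S := by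
      intro hyS
      have := hdist y hyS
      rw [hammingDist_self] at this
      omega
    refine ⟨insert y S, ?_, ?_⟩
    · rw [Finset.card_insert_of_notMem hyS, hScard]
    · intro a ha b hb hab
      rw [Finset.mem_insert] at ha hb
      rcases ha with ha | ha <;> rcases hb with hb | hb
      · exact absurd (ha.trans hb.symm) hab
      · subst ha; rw [hammingDist_comm]; exact hdist b hb
      · subst hb; exact hdist a ha
      · exact hSdist a ha b hb hab


-- Chernoff-type bound on partial binomial sums
lemma mySumChoose (m r : ℕ) (x : ℝ) (hx0 : 0 < x) (hx1 : x ≤ 1) (hrm : r ≤ m + 1) :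
    (∑ j ∈ Finset.range r, (m.choose j : ℝ)) * x ^ r ≤ (1 + x) ^ m := by
  have h1 : (∑ j ∈ Finset.range r, (m.choose j : ℝ)) * x ^ r
      = ∑ j ∈ Finset.range r, (m.choose j : ℝ) * x ^ r := by
    rw [Finset.sum_mul]
  rw [h1]
  have h2 : ∑ j ∈ Finset.range r, (m.choose j : ℝ) * x ^ r
      ≤ ∑ j ∈ Finset.range r, (m.choose j : ℝ) * x ^ j := by
    apply Finset.sum_le_sum
    intro j hj
    have hjr : j ≤ r := (Finset.mem_range.mp hj).le
    exact mul_le_mul_of_nonneg_left (pow_le_pow_of_le_one hx0.le hx1 hjr)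
      (Nat.cast_nonneg _)
  refine h2.trans ?_
  have h3 : ∑ j ∈ Finset.range r, (m.choose j : ℝ) * x ^ j
      ≤ ∑ j ∈ Finset.range (m + 1), (m.choose j : ℝ) * x ^ j := by
    apply Finset.sum_le_sum_of_subset_of_nonneg (Finset.range_subset_range.mpr hrm)
    intro j _ _
    positivity
  refine h3.trans ?_
  rw [add_comm (1 : ℝ) x, add_pow]
  apply le_of_eq
  apply Finset.sum_congr rfl
  intro j _
  ring

lemma myLogOneSub (u : ℝ) (h0 : 0 ≤ u) (h1 : u ≤ 1/2) :
    -u - 2*u^2 ≤ Real.log (1 - u) := by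
  have h1u : (0:ℝ) < 1 - u := by linarith
  have := Real.log_le_sub_one_of_pos (x := (1 - u)⁻¹) (by positivity)
  rw [Real.log_inv] at this
  have h2 : (1 - u)⁻¹ - 1 = u / (1 - u) := by field_simp; ring
  rw [h2] at this
  have h3 : u / (1 - u) ≤ u + 2*u^2 := by
    rw [div_le_iff₀ h1u]
    nlinarith
  linarith

lemma myLogTwoSub (u : ℝ) (h0 : 0 ≤ u) (h1 : u ≤ 1/2) :
    u/2 ≤ Real.log 2 - Real.log (2 - u) := by
  have h2u : (0:ℝ) < 2 - u := by linarith
  have := Real.log_le_sub_one_of_pos (x := (2 - u)/2) (by positivity)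
  rw [Real.log_div (by linarith) (by norm_num)] at this
  linarith




set_option maxHeartbeats 1000000 in
lemma myKey (L k δ u : ℝ) (m : ℕ) (hk : 1/2 ≤ k) (hkL : k ≤ L)
    (hδ : δ = 16 / Real.sqrt k) (hu : u = min (δ/8) (1/2))
    (hm : (2+δ)*L ≤ m) :
    (L/k + 1) * Real.log 2 + (m:ℝ) * Real.log (1 + (1-u)) ≤
      (m:ℝ) * Real.log 2 + L * Real.log (1-u) := by
  have hk0 : (0:ℝ) < k := by linarith
  have hs0 : 0 < Real.sqrt k := Real.sqrt_pos.mpr hk0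
  have hs2 : Real.sqrt k ^ 2 = k := Real.sq_sqrt hk0.le
  have hs07 : (0.7:ℝ) ≤ Real.sqrt k := by
    nlinarith [Real.sqrt_nonneg k]
  have hδ0 : 0 < δ := by rw [hδ]; positivity
  have hu0 : 0 < u := by rw [hu]; exact lt_min (by positivity) (by norm_num)
  have hu2 : u ≤ 1/2 := hu ▸ min_le_right _ _
  have hu3 : u ≤ δ/8 := hu ▸ min_le_left _ _
  have hL0 : (0:ℝ) < L := lt_of_lt_of_le hk0 hkL
  have hlog2 : Real.log 2 < 0.6931471808 := Real.log_two_lt_d9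
  have hlog2pos : (0:ℝ) < Real.log 2 := Real.log_pos (by norm_num)
  -- key numeric inequality
  have hnum : 2 * Real.log 2 / k ≤ δ*u/2 - 2*u^2 := by
    have hδs : δ * Real.sqrt k = 16 := by rw [hδ]; field_simp
    rcases le_total (δ/8) (1/2) with hcase | hcase
    · -- u = δ/8
      have hueq : u = δ/8 := by rw [hu, min_eq_left hcase]
      rw [hueq, div_le_iff₀ hk0]
      -- goal: 2 log 2 ≤ (δ*(δ/8)/2 - 2*(δ/8)^2) * k = δ^2/32 * k = 8
      have hδ2 : δ^2 * k = 256 := by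
        have : (δ * Real.sqrt k)^2 = 256 := by rw [hδs]; norm_num
        nlinarith [this]
      nlinarith
    · -- u = 1/2
      have hueq : u = 1/2 := by rw [hu, min_eq_right hcase]
      have hδ4 : 4 ≤ δ := by linarith
      have hsle : Real.sqrt k ≤ 4 := by
        nlinarith [hδs]
      rw [hueq, div_le_iff₀ hk0]
      -- goal: 2 log 2 ≤ (δ/4 - 1/2) * k ; δ*k = 16 * sqrt k
      have hδk : δ * k = 16 * Real.sqrt k := by
        nlinarith [hδs, hs2]
      nlinarith [hs2, hs07, hsle, hδk]
  have hA : (2+δ)*L*(u/2) ≤ (m:ℝ) * (Real.log 2 - Real.log (2 - u)) := by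
    have h1 := myLogTwoSub u hu0.le hu2
    have h2 : (0:ℝ) ≤ u/2 := by linarith
    calc (2+δ)*L*(u/2) ≤ (m:ℝ)*(u/2) := mul_le_mul_of_nonneg_right hm h2
    _ ≤ (m:ℝ) * (Real.log 2 - Real.log (2 - u)) :=
        mul_le_mul_of_nonneg_left h1 (Nat.cast_nonneg _)
  have hB : L * (-u - 2*u^2) ≤ L * Real.log (1-u) :=
    mul_le_mul_of_nonneg_left (myLogOneSub u hu0.le hu2) hL0.le
  have hC : (L/k + 1) * Real.log 2 ≤ L * (2 * Real.log 2 / k) := by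
    have h1 : 1 ≤ L/k := (one_le_div hk0).mpr hkL
    have : L * (2 * Real.log 2 / k) = (L/k + L/k) * Real.log 2 := by field_simp; ring
    rw [this]
    apply mul_le_mul_of_nonneg_right _ hlog2pos.le
    linarith
  have hD : L * (2 * Real.log 2 / k) ≤ L * (δ*u/2 - 2*u^2) :=
    mul_le_mul_of_nonneg_left hnum hL0.le
  have heq : (1:ℝ) + (1 - u) = 2 - u := by ring
  rw [heq]
  linarith [hA, hB, hC, hD]


/- STATEMENT 4 (upper bound for `λ = k·log₂(n−1)`, `k ≥ 1/2`).
A bipartite covering of the complete multigraph `K_n^λ` is a finite family of `m`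
bipartite graphs given by pairs of disjoint bipartition classes `(A i, B i)` such that
every pair of distinct vertices is separated by at least `λ` of the pairs.  Here
`|H| = m` and the capacity is `∑ i, |A i ∪ B i|`. -/



set_option maxHeartbeats 1000000 in
theorem multigraph_cover_upper_bound_linear (n lam : ℕ) (k : ℝ)
    (hn : 2 ≤ n) (hk : 1 / 2 ≤ k) (hlam : 1 ≤ lam)
    (hlamk : (lam : ℝ) = k * Real.logb 2 ((n : ℝ) - 1)) :
    ∃ (m : ℕ) (A B : Fin m → Finset (Fin n)),
      (∀ i, Disjoint (A i) (B i)) ∧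
      (∀ x y : Fin n, x ≠ y →
        lam ≤ (Finset.univ.filter
          (fun i => (x ∈ A i ∧ y ∈ B i) ∨ (x ∈ B i ∧ y ∈ A i))).card) ∧
      (m : ℝ) ≤ (2 + 30 / Real.sqrt k) * (lam : ℝ) ∧
      (∑ i, ((A i ∪ B i).card : ℝ)) ≤ (2 + 30 / Real.sqrt k) * (lam : ℝ) * (n : ℝ) := by
  classical
  have hk0 : (0:ℝ) < k := by linarith
  have hs0 : 0 < Real.sqrt k := Real.sqrt_pos.mpr hk0
  have hs2 : Real.sqrt k ^ 2 = k := Real.sq_sqrt hk0.le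
  have hs07 : (0.7:ℝ) ≤ Real.sqrt k := by nlinarith [Real.sqrt_nonneg k]
  set δ : ℝ := 16 / Real.sqrt k with hδdef
  have hδ0 : 0 < δ := by positivity
  set u : ℝ := min (δ/8) (1/2) with hudef
  have hu0 : 0 < u := lt_min (by positivity) (by norm_num)
  have hu2 : u ≤ 1/2 := min_le_right _ _
  have hL1 : (1:ℝ) ≤ (lam:ℝ) := by exact_mod_cast hlam
  -- n ≥ 3
  have hn3 : 3 ≤ n := by
    by_contra h
    have hn2' : n = 2 := by omega
    rw [hn2'] at hlamk
    norm_num at hlamk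
    linarith
  have hn2r : (2:ℝ) ≤ (n:ℝ) - 1 := by
    have : (3:ℝ) ≤ (n:ℝ) := by exact_mod_cast hn3
    linarith
  have hlogb1 : 1 ≤ Real.logb 2 ((n:ℝ)-1) := by
    rw [Real.le_logb_iff_rpow_le (by norm_num) (by linarith)]
    rw [Real.rpow_one]; exact hn2r
  have hkL : k ≤ (lam:ℝ) := by rw [hlamk]; nlinarith
  set m : ℕ := ⌈(2+δ) * (lam:ℝ)⌉₊ with hmdef
  have hm1 : (2+δ)*(lam:ℝ) ≤ (m:ℝ) := Nat.le_ceil _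
  have hm2 : (m:ℝ) ≤ (2+δ)*(lam:ℝ) + 1 := (Nat.ceil_lt_add_one (by positivity)).le
  have h2lam : 2*lam ≤ m := by
    have : ((2*lam : ℕ):ℝ) ≤ (m:ℝ) := by push_cast; nlinarith
    exact_mod_cast this
  -- the real counting inequality
  set x : ℝ := 1 - u with hxdef
  have hxpos : (0:ℝ) < x := by simp only [hxdef]; linarith
  have hxle1 : x ≤ 1 := by simp only [hxdef]; linarith
  have hVx := mySumChoose m lam x hxpos hxle1 (by omega)
  have hlogbeq : (lam:ℝ)/k = Real.logb 2 ((n:ℝ)-1) := by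
    rw [hlamk]; field_simp
  have hpow : (2:ℝ) ^ ((lam:ℝ)/k) = (n:ℝ)-1 := by
    rw [hlogbeq]
    exact Real.rpow_logb (by norm_num) (by norm_num) (by linarith)
  have hnle : (n:ℝ) ≤ (2:ℝ) ^ ((lam:ℝ)/k + 1) := by
    rw [Real.rpow_add (by norm_num), Real.rpow_one, hpow]
    linarith
  have hkey := myKey (lam:ℝ) k δ u m hk hkL hδdef hudef hm1
  -- main multiplicative inequality via logs
  have hmain : (2:ℝ) ^ ((lam:ℝ)/k + 1) * (1+x)^m ≤ (2:ℝ)^m * x^lam := by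
    have hp1 : (0:ℝ) < (2:ℝ) ^ ((lam:ℝ)/k + 1) * (1+x)^m := by positivity
    have hp2 : (0:ℝ) < (2:ℝ)^m * x^lam := by positivity
    rw [← Real.log_le_log_iff hp1 hp2]
    rw [Real.log_mul (by positivity) (by positivity),
        Real.log_mul (by positivity) (by positivity),
        Real.log_rpow (by norm_num), Real.log_pow, Real.log_pow, Real.log_pow]
    simp only [hxdef]
    exact hkey
  have hreal : (n:ℝ) * (∑ j ∈ Finset.range lam, (m.choose j : ℝ)) ≤ (2:ℝ)^m := by
    have hVnn : (0:ℝ) ≤ ∑ j ∈ Finset.range lam, (m.choose j : ℝ) :=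
      Finset.sum_nonneg fun _ _ => Nat.cast_nonneg _
    have h1 : (n:ℝ) * (∑ j ∈ Finset.range lam, (m.choose j : ℝ)) * x^lam
        ≤ (2:ℝ) ^ ((lam:ℝ)/k + 1) * (1+x)^m := by
      rw [mul_assoc]
      apply mul_le_mul hnle hVx (by positivity) (by positivity)
    have h2 := h1.trans hmain
    have hxl : (0:ℝ) < x^lam := by positivity
    exact le_of_mul_le_mul_right h2 hxl
  have hnat : n * (∑ j ∈ Finset.range lam, m.choose j) ≤ 2 ^ m := by
    have : ((n * ∑ j ∈ Finset.range lam, m.choose j : ℕ) : ℝ) ≤ ((2^m : ℕ) : ℝ) := by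
      push_cast
      exact hreal
    exact_mod_cast this
  obtain ⟨S, hScard, hSdist⟩ := myExistsCode m lam n hlam hnat
  set f : Fin n → (Fin m → Bool) := fun i => ((S.equivFinOfCardEq hScard).symm i : Fin m → Bool)
    with hfdef
  have hfinj : Function.Injective f := fun a b hab =>
    (S.equivFinOfCardEq hScard).symm.injective (Subtype.coe_injective hab)
  have hfS : ∀ i, f i ∈ S := fun i => ((S.equivFinOfCardEq hScard).symm i).2
  have hmb : (m:ℝ) ≤ (2 + 30 / Real.sqrt k) * (lam:ℝ) := by
    have h14 : (1:ℝ) ≤ 14 * (lam:ℝ) / Real.sqrt k := by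
      rw [le_div_iff₀ hs0]
      nlinarith
    have hδ30 : (2 + 30 / Real.sqrt k) * (lam:ℝ) - (2+δ)*(lam:ℝ)
        = 14 * (lam:ℝ) / Real.sqrt k := by
      rw [hδdef]; field_simp; ring
    linarith
  set A : Fin m → Finset (Fin n) := fun i => Finset.univ.filter (fun v => f v i = true)
    with hAdef
  set B : Fin m → Finset (Fin n) := fun i => Finset.univ.filter (fun v => f v i = false)
    with hBdef
  have hcardAB : ∀ i, ((A i ∪ B i).card : ℝ) ≤ (n : ℝ) := by
    intro i
    have := Finset.card_le_card (Finset.subset_univ (A i ∪ B i))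
    rw [Finset.card_univ, Fintype.card_fin] at this
    exact_mod_cast this
  refine ⟨m, A, B, ?_, ?_, hmb, ?_⟩
  · intro i
    rw [Finset.disjoint_left]
    intro a ha ha'
    rw [hAdef] at ha
    rw [hBdef] at ha'
    simp only [Finset.mem_filter, Finset.mem_univ, true_and] at ha ha'
    rw [ha] at ha'
    simp at ha'
  · intro a b hab
    have hfab : f a ≠ f b := fun h => hab (hfinj h)
    have hd := hSdist (f a) (hfS a) (f b) (hfS b) hfab
    have heq : (Finset.univ.filter
        (fun i => (a ∈ A i ∧ b ∈ B i) ∨ (a ∈ B i ∧ b ∈ A i)))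
        = Finset.univ.filter (fun i => f a i ≠ f b i) := by
      apply Finset.filter_congr
      intro i _
      rw [hAdef, hBdef]
      simp only [Finset.mem_filter, Finset.mem_univ, true_and]
      cases hfa : f a i <;> cases hfb : f b i <;> simp
    rw [heq]
    exact hd
  · calc (∑ i : Fin m, ((A i ∪ B i).card : ℝ))
        ≤ ∑ _i : Fin m, (n:ℝ) := Finset.sum_le_sum (fun i _ => hcardAB i)
      _ = (m:ℝ) * (n:ℝ) := by
          rw [Finset.sum_const, Finset.card_univ, Fintype.card_fin, nsmul_eq_mul]
      _ ≤ (2 + 30 / Real.sqrt k) * (lam:ℝ) * (n:ℝ) :=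
          mul_le_mul_of_nonneg_right hmb (Nat.cast_nonneg _)
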